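/- For every δ ∈ (0,1) there exists an integer N_δ such that for every integer N ≥ N_δ and every integer q with N^δ < q < δN/(2·log N), there exists an integer k with q ≤ k ≤ 2q·log(q)/δ such that the remainder of N upon division by k is at least q. -/

import Mathlib

open Finset in
lemma aux_lcm_ne_zero (M : ℕ) : (Finset.Icc 1 M).lcm id ≠ 0 := by
  intro h
  rw [Finset.lcm_eq_zero_iff] at h
  obtain ⟨x, hx, hx0⟩ := h
  simp only [Finset.mem_coe, Finset.mem_Icc, id_eq] at hx hx0
  omega

open Finset in
lemma aux_choose_dvd_lcm {m M k : ℕ} (hm : 0 < m) (hmM : m ≤ M) (hk : k ≤ m) :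
    m.choose k ∣ (Finset.Icc 1 M).lcm id := by
  · have hc : m.choose k ≠ 0 := (Nat.choose_pos hk).ne'
    rw [← Nat.factorization_le_iff_dvd hc (aux_lcm_ne_zero M)]
    intro p
    by_cases hp : p.Prime
    · have h1 : p ^ ((m.choose k).factorization p) ≤ m :=
        Nat.pow_factorization_choose_le hm
      have h2 : (p : ℕ) ^ ((m.choose k).factorization p) ∣ (Finset.Icc 1 M).lcm id := by
        apply Finset.dvd_lcm (f := id) (b := p ^ ((m.choose k).factorization p))
        simp only [Finset.mem_Icc]
        exact ⟨Nat.one_le_pow _ _ hp.pos, le_trans h1 hmM⟩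
      exact (Nat.Prime.pow_dvd_iff_le_factorization hp (aux_lcm_ne_zero M)).mp h2
    · simp [Nat.factorization_eq_zero_of_not_prime _ hp]

set_option maxHeartbeats 1000000 in
/-- Fact 2.2: for every δ ∈ (0,1) there is N_δ such that for all N ≥ N_δ and all q with
N^δ < q < δN/(2 log N), there exists k with q ≤ k ≤ 2q log q / δ and N mod k ≥ q. -/
theorem stmt2 (δ : ℝ) (hδ : δ ∈ Set.Ioo (0 : ℝ) 1) :
    ∃ Nδ : ℕ, ∀ N : ℕ, Nδ ≤ N → ∀ q : ℕ, 0 < q →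
      (N : ℝ) ^ δ < (q : ℝ) → (q : ℝ) < δ * N / (2 * Real.log N) →
      ∃ k : ℕ, q ≤ k ∧ (k : ℝ) ≤ 2 * q * Real.log q / δ ∧ q ≤ N % k := by
  obtain ⟨hδ0, hδ1⟩ := hδ
  refine ⟨⌈(96 / δ) ^ (6:ℕ)⌉₊ + 3, fun N hN q hq hq1 hq2 => ?_⟩
  by_contra hcon
  push_neg at hcon
  -- basic facts about N
  have hN3 : 3 ≤ N := le_trans (by omega) hN
  have hNR : (3:ℝ) ≤ (N:ℝ) := by exact_mod_cast hN3
  have hN0 : (0:ℝ) < (N:ℝ) := by linarith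
  have hLN : 1 ≤ Real.log N := by
    rw [← Real.log_exp 1]
    exact Real.log_le_log (Real.exp_pos 1) (le_trans Real.exp_one_lt_d9.le (by linarith))
  have hLNpos : 0 < Real.log N := by linarith
  -- q < N
  have hqN : q < N := by
    have h2 : δ * N / (2 * Real.log N) < N := by
      rw [div_lt_iff₀ (by positivity)]
      nlinarith
    exact_mod_cast lt_trans hq2 h2
  have hqR : (1:ℝ) < q := by
    have : (1:ℝ) < (N:ℝ) ^ δ := Real.one_lt_rpow_iff_of_pos hN0 |>.mpr (Or.inl ⟨by linarith, hδ0⟩)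
    linarith
  have hq0R : (0:ℝ) < q := by linarith
  have hLq0 : 0 < Real.log q := Real.log_pos hqR
  have hLqLN : Real.log q ≤ Real.log N := Real.log_le_log hq0R (by exact_mod_cast hqN.le)
  have hLqd : δ * Real.log N < Real.log q := by
    have := Real.log_lt_log (by positivity : (0:ℝ) < (N:ℝ) ^ δ) hq1
    rwa [Real.log_rpow hN0] at this
  -- M and n
  set x : ℝ := 2 * Real.log q / δ with hxdef
  have hx2 : 2 * Real.log N < x := by
    rw [hxdef, lt_div_iff₀ hδ0]
    nlinarith
  have hx0 : 0 ≤ x := by positivity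
  set M : ℕ := ⌊x⌋₊ with hMdef
  have hMx : (M:ℝ) ≤ x := Nat.floor_le hx0
  have hMx2 : x - 1 < M := Nat.sub_one_lt_floor x
  have hM2 : 2 ≤ M := by
    have h1 : (1:ℝ) < (M:ℝ) := by nlinarith
    have := Nat.one_lt_cast.mp h1
    omega
  set n : ℕ := M / 2 with hndef
  have hn1 : 1 ≤ n := by omega
  have h2nM : 2 * n ≤ M := by omega
  -- all k = m*q in range have small remainder
  have hsmall : ∀ m ∈ Finset.Icc 1 M, N % (m * q) < q := by
    intro m hm
    rw [Finset.mem_Icc] at hm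
    apply hcon (m * q) (Nat.le_mul_of_pos_left q (by omega))
    push_cast
    calc (m:ℝ) * q ≤ M * q := by
          have : (m:ℝ) ≤ M := by exact_mod_cast hm.2
          nlinarith
      _ ≤ x * q := by nlinarith
      _ = 2 * q * Real.log q / δ := by rw [hxdef]; ring
  -- remainders all equal r
  set r : ℕ := N % q with hrdef
  have hrq : r < q := Nat.mod_lt N hq
  have hmodeq : ∀ m ∈ Finset.Icc 1 M, N % (m * q) = r := by
    intro m hm
    have h1 : N % (m * q) < q := hsmall m hm
    have h2 : N % (m * q) % q = N % q := Nat.mod_mod_of_dvd N ⟨m, mul_comm m q⟩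
    rw [hrdef, ← h2, Nat.mod_eq_of_lt h1]
  have hdvd : ∀ m ∈ Finset.Icc 1 M, m * q ∣ N - r := by
    intro m hm
    have := Nat.dvd_sub_mod (n := m * q) N
    rwa [hmodeq m hm] at this
  have h1M : 1 ∈ Finset.Icc 1 M := Finset.mem_Icc.mpr ⟨le_refl 1, by omega⟩
  have hqdvd : q ∣ N - r := by have := hdvd 1 h1M; rwa [one_mul] at this
  have hNr : 0 < N - r := by omega
  have hdvd2 : ∀ m ∈ Finset.Icc 1 M, m ∣ (N - r) / q := by
    intro m hm
    rw [Nat.dvd_div_iff_mul_dvd hqdvd, mul_comm]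
    exact hdvd m hm
  have hLdvd : (Finset.Icc 1 M).lcm id ∣ (N - r) / q :=
    Finset.lcm_dvd (fun m hm => hdvd2 m hm)
  have hdivpos : 0 < (N - r) / q := Nat.div_pos (Nat.le_of_dvd hNr hqdvd) hq
  have hCBdvd : Nat.centralBinom n ∣ (N - r) / q :=
    dvd_trans (aux_choose_dvd_lcm (by omega) h2nM (by omega)) hLdvd
  have hCBle : Nat.centralBinom n ≤ (N - r) / q := Nat.le_of_dvd hdivpos hCBdvd
  have hkey : q * Nat.centralBinom n ≤ N := by
    calc q * Nat.centralBinom n ≤ q * ((N - r) / q) := Nat.mul_le_mul_left q hCBle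
      _ = N - r := Nat.mul_div_cancel' hqdvd
      _ ≤ N := Nat.sub_le N r
  have hfour : 4 ^ n ≤ 2 * n * Nat.centralBinom n :=
    Nat.four_pow_le_two_mul_self_mul_centralBinom n hn1
  have hnat : q * 4 ^ n ≤ 2 * n * N := by
    calc q * 4 ^ n ≤ q * (2 * n * Nat.centralBinom n) := Nat.mul_le_mul_left q hfour
      _ = 2 * n * (q * Nat.centralBinom n) := by ring
      _ ≤ 2 * n * N := Nat.mul_le_mul_left _ hkey
  -- now the real contradiction
  have hnatR : (q:ℝ) * 4 ^ n ≤ 2 * n * N := by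
    have := (Nat.cast_le (α := ℝ)).mpr hnat
    push_cast at this
    linarith
  set E : ℝ := Real.log N with hEdef
  -- bounds on n
  have hnlo : E - 1 ≤ (n:ℝ) := by
    have h2n : (M:ℝ) ≤ 2 * (n:ℝ) + 1 := by exact_mod_cast (by omega : M ≤ 2 * n + 1)
    nlinarith
  have hnhi : (n:ℝ) ≤ E / δ := by
    have h1 : (2 * (n:ℝ)) ≤ (M:ℝ) := by exact_mod_cast h2nM
    have h3 : x / 2 = Real.log q / δ := by rw [hxdef]; ring
    have h4 : Real.log q / δ ≤ E / δ := (div_le_div_iff_of_pos_right hδ0).mpr hLqLN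
    linarith
  -- log 4 bounds
  have hlog4 : Real.log 4 = 2 * Real.log 2 := by
    rw [show (4:ℝ) = 2 ^ 2 by norm_num, Real.log_pow]
    push_cast; ring
  have hlog4lo : (4:ℝ)/3 ≤ Real.log 4 := by
    rw [hlog4]; linarith [Real.log_two_gt_d9]
  have hlog4hi : Real.log 4 ≤ 3/2 := by
    rw [hlog4]; linarith [Real.log_two_lt_d9]
  -- 4^n as exp
  have h4n : ((4:ℝ)) ^ n = Real.exp ((n:ℝ) * Real.log 4) := by
    rw [Real.exp_nat_mul, Real.exp_log (by norm_num : (0:ℝ) < 4)]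
  have h4nlo : Real.exp ((4/3) * E - 3/2) ≤ (4:ℝ) ^ n := by
    rw [h4n]
    apply Real.exp_le_exp.mpr
    have h1 : (E - 1) * Real.log 4 ≤ (n:ℝ) * Real.log 4 := by
      apply mul_le_mul_of_nonneg_right hnlo (by linarith)
    nlinarith
  -- q as exp
  have hqlo : Real.exp (δ * E) < q := by
    have : (N:ℝ) ^ δ = Real.exp (δ * E) := by
      rw [Real.rpow_def_of_pos hN0, hEdef]; ring_nf
    linarith [hq1, this.symm.le]
  -- combine: exp(δE + (4/3)E - 3/2) < 2*(E/δ)*exp(E)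
  have hNexp : (N:ℝ) = Real.exp E := (Real.exp_log hN0).symm
  have hmain : Real.exp (δ * E + (4/3) * E - 3/2) < 2 * (E / δ) * Real.exp E := by
    have h1 : Real.exp (δ * E + (4/3) * E - 3/2) =
        Real.exp (δ * E) * Real.exp ((4/3) * E - 3/2) := by
      rw [← Real.exp_add]; ring_nf
    have h2 : Real.exp (δ * E) * Real.exp ((4/3) * E - 3/2) ≤ Real.exp (δ * E) * (4:ℝ)^n := by
      apply mul_le_mul_of_nonneg_left h4nlo (Real.exp_pos _).le
    have h3 : Real.exp (δ * E) * (4:ℝ)^n < (q:ℝ) * 4^n := by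
      apply mul_lt_mul_of_pos_right hqlo (by positivity)
    have h4 : 2 * (n:ℝ) * N ≤ 2 * (E / δ) * Real.exp E := by
      rw [← hNexp]
      have : 2 * (n:ℝ) ≤ 2 * (E / δ) := by linarith
      nlinarith
    linarith
  -- divide by exp E
  have hmain2 : Real.exp (δ * E + E/3 - 3/2) < 2 * (E / δ) := by
    have h1 : Real.exp (δ * E + (4/3) * E - 3/2) =
        Real.exp (δ * E + E/3 - 3/2) * Real.exp E := by
      rw [← Real.exp_add]; ring_nf
    rw [h1] at hmain
    have := lt_of_mul_lt_mul_right hmain (Real.exp_pos E).le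
    exact this
  -- lower bound LHS by N^{1/3}/8
  set A : ℝ := (N:ℝ) ^ ((1:ℝ)/6) with hAdef
  have hA0 : 0 < A := Real.rpow_pos_of_pos hN0 _
  have hB : (N:ℝ) ^ ((1:ℝ)/3) = A ^ (2:ℕ) := by
    rw [hAdef, ← Real.rpow_natCast ((N:ℝ) ^ ((1:ℝ)/6)) 2, ← Real.rpow_mul hN0.le]
    norm_num
  have hexp2 : Real.exp (3/2 : ℝ) < 8 := by
    have h1 : Real.exp (3/2 : ℝ) ≤ Real.exp 2 := Real.exp_le_exp.mpr (by norm_num)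
    have h2 : Real.exp (2:ℝ) = Real.exp 1 ^ (2:ℕ) := by
      rw [← Real.exp_nat_mul]; norm_num
    nlinarith [Real.exp_one_lt_d9, Real.exp_pos (1:ℝ)]
  have hthird : Real.exp (E / 3) = (N:ℝ) ^ ((1:ℝ)/3) := by
    rw [Real.rpow_def_of_pos hN0, hEdef]; ring_nf
  have hlhs : A ^ (2:ℕ) / 8 < 2 * (E / δ) := by
    have h1 : Real.exp (E/3 - 3/2) ≤ Real.exp (δ * E + E/3 - 3/2) := by
      apply Real.exp_le_exp.mpr
      nlinarith
    have h2 : Real.exp (E/3 - 3/2) = Real.exp (E/3) / Real.exp (3/2) := by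
      rw [← Real.exp_sub]
    have h3 : Real.exp (E/3) / 8 < Real.exp (E/3) / Real.exp (3/2) := by
      apply div_lt_div_of_pos_left (Real.exp_pos _) (by positivity) hexp2
    rw [hthird, hB] at h2 h3
    linarith
  -- upper bound E by 6A
  have hE6A : E ≤ 6 * A := by
    have h := Real.log_le_rpow_div hN0.le (by norm_num : (0:ℝ) < 1/6)
    have h2 : (N:ℝ) ^ ((1:ℝ)/6) / (1/6) = 6 * A := by rw [hAdef]; ring
    rw [hEdef]
    linarith [h, h2]
  -- A > 96/δ
  have hAbig : 96 / δ < A := by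
    have h1 : ((96/δ) ^ (6:ℕ) : ℝ) < (N:ℝ) := by
      have h2 : ((96/δ) ^ (6:ℕ) : ℝ) ≤ (⌈(96 / δ) ^ (6:ℕ)⌉₊ : ℝ) := Nat.le_ceil _
      have h3 : (⌈(96 / δ) ^ (6:ℕ)⌉₊ : ℝ) + 3 ≤ (N:ℝ) := by
        exact_mod_cast (by omega : ⌈(96 / δ) ^ (6:ℕ)⌉₊ + 3 ≤ N)
      linarith
    have h4 : (0:ℝ) ≤ (96/δ) ^ (6:ℕ) := by positivity
    have h5 : ((96/δ) ^ (6:ℕ) : ℝ) ^ ((1:ℝ)/6) < (N:ℝ) ^ ((1:ℝ)/6) :=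
      Real.rpow_lt_rpow h4 h1 (by norm_num)
    have h6 : ((96/δ) ^ (6:ℕ) : ℝ) ^ ((1:ℝ)/6) = 96/δ := by
      rw [← Real.rpow_natCast (96/δ) 6, ← Real.rpow_mul (by positivity)]
      norm_num
    rw [h6] at h5
    exact h5
  -- final contradiction
  have hfinal : A ^ (2:ℕ) / 8 < 2 * (6 * A / δ) := by
    have : 2 * (E / δ) ≤ 2 * (6 * A / δ) := by gcongr
    linarith
  -- A^2 < 96 A / δ  ⇒  A < 96/δ, contradiction
  have : A ^ (2:ℕ) < 96 * A / δ := by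
    have h8 : 2 * (6 * A / δ) * 8 = 96 * A / δ := by ring
    nlinarith
  have hcontra : A < 96 / δ := by
    have hA2 : A ^ (2:ℕ) = A * A := sq A
    rw [hA2] at this
    have h9 : A * A * δ < 96 * A := by
      have := mul_lt_mul_of_pos_right this hδ0
      calc A * A * δ < 96 * A / δ * δ := this
        _ = 96 * A := by field_simp
    rw [lt_div_iff₀ hδ0]
    have h10 : A * δ * A < 96 * A := by
      rw [show A * δ * A = A * A * δ by ring]; exact h9
    exact lt_of_mul_lt_mul_right h10 hA0.le
  linarith
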